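/- arXiv:1911.03764 — 5 statements merged into one kernel-verified Lean document; each statement's English description precedes it below -/
import Mathlib

section
/- Let T ≥ 1 and define f(ω) = Σ_{t=1}^T ω_t² − (1/T)(Σ_{t=1}^T ω_t)² + 2 Σ_{t=1}^T ((T+1−2t)/T) ω_t for ω ∈ ℝ^T. Then the vector ω* with ω*_t = (2t−1−T)/T satisfies f(ω*) ≤ f(ω) for all ω ∈ ℝ^T with −1 ≤ ω_t ≤ 1 and ω_t ≤ ω_{t+1} for all t. Moreover ω* itself satisfies these constraints. -/
open Finset

/-- The convex-relaxed variance objective for a `T`-period staggered rollout: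
`f(ω) = Σ_t ω_t² − (1/T)(Σ_t ω_t)² + 2 Σ_t ((T+1−2t)/T) ω_t`,
where the time index `t : Fin T` corresponds to period `t+1`. -/
noncomputable def fobj (T : ℕ) (ω : Fin T → ℝ) : ℝ :=
  (∑ t, ω t ^ 2) - (1 / (T : ℝ)) * (∑ t, ω t) ^ 2
    + 2 * ∑ t : Fin T, (((T : ℝ) + 1 - 2 * (((t : ℕ) : ℝ) + 1)) / (T : ℝ)) * ω t

/-- The candidate optimal profile `ω*_t = (2t−1−T)/T` (period `t = t.val + 1`). -/
noncomputable def omegaStar (T : ℕ) (t : Fin T) : ℝ :=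
  (2 * (((t : ℕ) : ℝ) + 1) - 1 - (T : ℝ)) / (T : ℝ)

lemma sum_range_id_real (T : ℕ) :
    ∑ i ∈ Finset.range T, (i : ℝ) = (T : ℝ) * ((T : ℝ) - 1) / 2 := by
  induction T with
  | zero => simp
  | succ n ih => rw [Finset.sum_range_succ, ih]; push_cast; ring

lemma omegaStar_sum (T : ℕ) : ∑ t, omegaStar T t = 0 := by
  unfold omegaStar
  rw [Fin.sum_univ_eq_sum_range (fun i => (2 * ((i : ℝ) + 1) - 1 - (T : ℝ)) / (T : ℝ))]
  rw [← Finset.sum_div]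
  have : ∑ i ∈ Finset.range T, (2 * ((i : ℝ) + 1) - 1 - (T : ℝ))
      = 2 * ∑ i ∈ Finset.range T, (i : ℝ) + (T : ℝ) * (1 - (T : ℝ)) := by
    rw [Finset.mul_sum]
    rw [show (T : ℝ) * (1 - (T : ℝ)) = (Finset.range T).card • (1 - (T : ℝ)) by
      simp [nsmul_eq_mul]]
    rw [← Finset.sum_const, ← Finset.sum_add_distrib]
    exact Finset.sum_congr rfl fun i _ => by ring
  rw [this, sum_range_id_real]
  by_cases h : (T : ℝ) = 0
  · simp [h]
  · field_simp
    ring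

theorem optimal_design_two_way_fixed_effects (T : ℕ) (hT : 1 ≤ T) :
    ((∀ t, -1 ≤ omegaStar T t ∧ omegaStar T t ≤ 1) ∧ Monotone (omegaStar T)) ∧
      ∀ ω : Fin T → ℝ, (∀ t, -1 ≤ ω t ∧ ω t ≤ 1) → Monotone ω →
        fobj T (omegaStar T) ≤ fobj T ω := by
  have hT0 : (0 : ℝ) < (T : ℝ) := by
    have : 0 < T := hT
    exact_mod_cast this
  constructor
  · constructor
    · intro t
      have ht1 : ((t : ℕ) : ℝ) + 1 ≤ (T : ℝ) := by exact_mod_cast t.isLt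
      have ht0 : (0 : ℝ) ≤ ((t : ℕ) : ℝ) := Nat.cast_nonneg _
      unfold omegaStar
      constructor
      · rw [le_div_iff₀ hT0]; nlinarith
      · rw [div_le_one hT0]; nlinarith
    · intro a b hab
      unfold omegaStar
      have : ((a : ℕ) : ℝ) ≤ ((b : ℕ) : ℝ) := by exact_mod_cast hab
      exact div_le_div_of_nonneg_right (by linarith) hT0.le
  · intro ω _ _
    set g : Fin T → ℝ := fun t => ω t - omegaStar T t with hg
    have hc : ∀ t : Fin T, ((T : ℝ) + 1 - 2 * (((t : ℕ) : ℝ) + 1)) / (T : ℝ)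
        = -omegaStar T t := by
      intro t; unfold omegaStar; ring
    -- atoms
    have hCω : ∑ t : Fin T, (((T : ℝ) + 1 - 2 * (((t : ℕ) : ℝ) + 1)) / (T : ℝ)) * ω t
        = -∑ t, omegaStar T t * ω t := by
      rw [← Finset.sum_neg_distrib]
      exact Finset.sum_congr rfl fun t _ => by rw [hc t]; ring
    have hCs : ∑ t : Fin T, (((T : ℝ) + 1 - 2 * (((t : ℕ) : ℝ) + 1)) / (T : ℝ)) * omegaStar T t
        = -∑ t, omegaStar T t ^ 2 := by
      rw [← Finset.sum_neg_distrib]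
      exact Finset.sum_congr rfl fun t _ => by rw [hc t]; ring
    have hgsum : ∑ t, g t = ∑ t, ω t := by
      simp only [hg]
      rw [Finset.sum_sub_distrib, omegaStar_sum, sub_zero]
    have hgsq : ∑ t, g t ^ 2
        = ∑ t, ω t ^ 2 - 2 * ∑ t, omegaStar T t * ω t + ∑ t, omegaStar T t ^ 2 := by
      simp only [hg]
      rw [Finset.mul_sum, ← Finset.sum_sub_distrib, ← Finset.sum_add_distrib]
      exact Finset.sum_congr rfl fun t _ => by ring
    have hdiff : fobj T ω - fobj T (omegaStar T)
        = ∑ t, g t ^ 2 - (1 / (T : ℝ)) * (∑ t, g t) ^ 2 := by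
      unfold fobj
      rw [hCω, hCs, hgsq, hgsum, omegaStar_sum]
      ring
    have hCS : (∑ t, g t) ^ 2 ≤ (T : ℝ) * ∑ t, g t ^ 2 := by
      have := sq_sum_le_card_mul_sum_sq (s := (Finset.univ : Finset (Fin T))) (f := g)
      simpa using this
    have : (1 / (T : ℝ)) * (∑ t, g t) ^ 2 ≤ ∑ t, g t ^ 2 := by
      rw [div_mul_eq_mul_div, one_mul, div_le_iff₀ hT0]
      nlinarith
    linarith [hdiff]
end

section
/- Let Z ∈ {−1,1}^{N×T} satisfy z_{it} ≤ z_{i,t+1} for all i, t (irreversible adoption). Let ω_t = (1/N)Σ_i z_{it} and ζ_i = (1/T)Σ_t z_{it}. Then Σ_{i=1}^N ζ_i² = (2N/T) Σ_{t=1}^T ((T+1−2t)/T) ω_t + N, where the sum on the right equals N[1 + (2/T)Σ_t ((T+1−2t)/T)ω_t]. In particular, given (ω_1,…,ω_T), the value Σ_i ζ_i² is uniquely determined. -/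
open Finset

/-- Per-unit identity: for a monotone ±1 sequence `f : Fin T → ℝ`,
`(∑ t, f t)^2 = T^2 + 2 ∑ t, (T - 1 - 2t) * f t`. -/
lemma per_unit_identity : ∀ (T : ℕ) (f : Fin T → ℝ),
    (∀ t, f t = 1 ∨ f t = -1) → Monotone f →
    (∑ t, f t) ^ 2 = (T : ℝ) ^ 2 + 2 * ∑ t : Fin T, ((T : ℝ) - 1 - 2 * ((t : ℕ) : ℝ)) * f t := by
  intro T
  induction T with
  | zero => intro f _ _; simp
  | succ T ih =>
    intro f hf hm
    set g : Fin T → ℝ := fun i => f i.castSucc with hg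
    have hgf : ∀ i, g i = 1 ∨ g i = -1 := fun i => hf _
    have hgm : Monotone g := fun a b h => hm (by simpa using h)
    have hih := ih g hgf hgm
    have hsum : ∑ t, f t = (∑ i, g i) + f (Fin.last T) := by
      rw [Fin.sum_univ_castSucc]
    have hsum2 : ∑ t : Fin (T+1), (((T:ℝ)+1) - 1 - 2 * ((t : ℕ) : ℝ)) * f t
        = (∑ i : Fin T, ((T:ℝ) - 1 - 2 * ((i : ℕ) : ℝ)) * g i) + (∑ i : Fin T, g i)
          + (-(T:ℝ)) * f (Fin.last T) := by
      rw [Fin.sum_univ_castSucc]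
      have : ∀ i : Fin T, (((T:ℝ)+1) - 1 - 2 * (((i.castSucc : Fin (T+1)) : ℕ) : ℝ)) * f i.castSucc
          = ((T:ℝ) - 1 - 2 * ((i : ℕ) : ℝ)) * g i + g i := by
        intro i
        simp only [Fin.coe_castSucc, hg]
        ring
      rw [Finset.sum_congr rfl (fun i _ => this i), Finset.sum_add_distrib]
      simp only [Fin.val_last]
      ring
    push_cast
    rw [hsum, hsum2]
    rcases hf (Fin.last T) with ha | ha
    · rw [ha]; nlinarith [hih]
    · have hall : ∀ i : Fin T, g i = -1 := by
        intro i
        rcases hgf i with h1 | h1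
        · exfalso
          have : g i ≤ f (Fin.last T) := hm (Fin.le_last _)
          rw [h1, ha] at this; linarith
        · exact h1
      have hS : ∑ i, g i = -(T : ℝ) := by
        rw [Finset.sum_congr rfl (fun i _ => hall i)]
        simp [Finset.card_univ]
      have hW : ∑ i : Fin T, ((T:ℝ) - 1 - 2 * ((i : ℕ) : ℝ)) * g i = 0 := by
        nlinarith [hih, hS]
      rw [ha, hS, hW]; ring

/-- Under the irreversible (monotone) adoption pattern with `z_{it} ∈ {−1,1}`, the sum of
squared time-series averages `Σ_i ζ_i²` is determined by the cross-sectional averages: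
`Σ_i ζ_i² = (2N/T) Σ_t ((T+1−2t)/T) ω_t + N`. -/
theorem sum_sq_time_averages_determined (N T : ℕ) (hT : 0 < T)
    (z : Fin N → Fin T → ℝ)
    (hz : ∀ i t, z i t = 1 ∨ z i t = -1)
    (hmono : ∀ i, Monotone (z i)) :
    ∑ i : Fin N, ((1 / (T : ℝ)) * ∑ t, z i t) ^ 2
      = (2 * (N : ℝ) / (T : ℝ))
          * (∑ t : Fin T, (((T : ℝ) + 1 - 2 * (((t : ℕ) : ℝ) + 1)) / (T : ℝ))
              * ((1 / (N : ℝ)) * ∑ i, z i t))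
        + (N : ℝ) := by
  rcases Nat.eq_zero_or_pos N with hN | hN
  · subst hN; simp
  have hNr : (N : ℝ) ≠ 0 := Nat.cast_ne_zero.mpr hN.ne'
  have hTr : (T : ℝ) ≠ 0 := Nat.cast_ne_zero.mpr hT.ne'
  have key : ∀ i, (∑ t, z i t) ^ 2
      = (T : ℝ) ^ 2 + 2 * ∑ t : Fin T, ((T : ℝ) - 1 - 2 * ((t : ℕ) : ℝ)) * z i t :=
    fun i => per_unit_identity T (z i) (hz i) (hmono i)
  have hL : ∑ i : Fin N, ((1 / (T : ℝ)) * ∑ t, z i t) ^ 2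
      = ∑ i : Fin N, ((1 / (T : ℝ)) ^ 2 * ((T : ℝ) ^ 2
          + 2 * ∑ t : Fin T, ((T : ℝ) - 1 - 2 * ((t : ℕ) : ℝ)) * z i t)) := by
    refine Finset.sum_congr rfl fun i _ => ?_
    rw [mul_pow, key i]
  have hswap : ∑ i : Fin N, ∑ t : Fin T, ((T : ℝ) - 1 - 2 * ((t : ℕ) : ℝ)) * z i t
      = ∑ t : Fin T, ((T : ℝ) - 1 - 2 * ((t : ℕ) : ℝ)) * ∑ i, z i t := by
    rw [Finset.sum_comm]
    exact Finset.sum_congr rfl fun t _ => (Finset.mul_sum _ _ _).symm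
  set A : ℝ := ∑ t : Fin T, ((T : ℝ) - 1 - 2 * ((t : ℕ) : ℝ)) * ∑ i, z i t with hA
  have hLHS : ∑ i : Fin N, ((1 / (T : ℝ)) * ∑ t, z i t) ^ 2
      = (1 / (T : ℝ)) ^ 2 * ((N : ℝ) * (T : ℝ) ^ 2 + 2 * A) := by
    rw [hL, ← Finset.mul_sum, Finset.sum_add_distrib, ← Finset.mul_sum, hswap]
    simp [Finset.sum_const, Finset.card_univ, mul_comm]
  have hRHS : ∑ t : Fin T, (((T : ℝ) + 1 - 2 * (((t : ℕ) : ℝ) + 1)) / (T : ℝ))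
              * ((1 / (N : ℝ)) * ∑ i, z i t)
      = (1 / ((T : ℝ) * (N : ℝ))) * A := by
    rw [hA, Finset.mul_sum]
    refine Finset.sum_congr rfl fun t _ => ?_
    ring
  rw [hLHS, hRHS]
  field_simp
  ring
end

section
/- (Unit fixed effects only) In the model Y_{it} = α_i + τ z_{it} + ε_{it} with Γ = 𝟙_T ⊗ I_N, the quantity zᵀΓ(ΓᵀΓ)^{-1}Γᵀz equals T Σ_{i=1}^N ζ_i² where ζ_i = (1/T)Σ_t z_{it}. Under the monotone adoption constraint z_{it} ≤ z_{i,t+1}, this is minimized exactly when every unit switches to treatment at the halfway point: ω_t = −1 for t < (T+1)/2 and ω_t = 1 for t > (T+1)/2. -/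
open Finset Matrix

/-- The design matrix `Γ = 𝟙_T ⊗ I_N` of one-hot unit indicators
(rows indexed by `(t, i)`, columns by unit `i`). -/
noncomputable def GammaUnit (N T : ℕ) : Matrix (Fin T × Fin N) (Fin N) ℝ :=
  Matrix.of fun q i => if q.2 = i then 1 else 0

/-- The quadratic form `wᵀΓ(ΓᵀΓ)⁻¹Γᵀw` for the unit-fixed-effects design matrix. -/
noncomputable def unitQF (N T : ℕ) (w : Fin T × Fin N → ℝ) : ℝ :=
  w ⬝ᵥ (GammaUnit N T * ((GammaUnit N T)ᵀ * GammaUnit N T)⁻¹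
      * (GammaUnit N T)ᵀ).mulVec w

lemma gram_eq (N T : ℕ) : (GammaUnit N T)ᵀ * GammaUnit N T = (T:ℝ) • 1 := by
  ext i j
  simp only [Matrix.mul_apply, GammaUnit, Matrix.transpose_apply, Matrix.of_apply,
    ite_mul, one_mul, zero_mul, Matrix.smul_apply, Matrix.one_apply, smul_ite, smul_zero]
  rcases eq_or_ne i j with h | h
  · subst h
    simp [Fintype.sum_prod_type, Finset.sum_ite_eq]
  · simp [Fintype.sum_prod_type, Finset.sum_ite_eq, h, Ne.symm h]

lemma proj_eq (N T : ℕ) :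
    GammaUnit N T * (GammaUnit N T)ᵀ
      = Matrix.of fun q r => if q.2 = r.2 then (1:ℝ) else 0 := by
  ext q r
  simp [Matrix.mul_apply, GammaUnit, ite_and, Finset.sum_ite_eq]

lemma unitQF_eq (N T : ℕ) (hT : 0 < T) (w : Fin T × Fin N → ℝ) :
    unitQF N T w = (T:ℝ)⁻¹ * ∑ i, (∑ t, w (t,i))^2 := by
  have hinv : ((GammaUnit N T)ᵀ * GammaUnit N T)⁻¹ = (T:ℝ)⁻¹ • 1 := by
    apply Matrix.inv_eq_right_inv
    rw [gram_eq, smul_mul_assoc, Matrix.mul_smul, one_mul, smul_smul,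
      mul_inv_cancel₀ (by positivity)]
    simp
  rw [unitQF, hinv, Matrix.mul_smul, Matrix.mul_one, Matrix.smul_mul, proj_eq,
    Matrix.smul_mulVec, dotProduct_smul]
  congr 1
  simp only [Matrix.mulVec, dotProduct, Matrix.of_apply, ite_mul, one_mul, zero_mul]
  rw [Fintype.sum_prod_type]
  simp only [Fintype.sum_prod_type]
  have : ∀ (t : Fin T) (i : Fin N),
      (∑ s : Fin T, ∑ j : Fin N, if i = j then w (s, j) else 0) = ∑ s : Fin T, w (s, i) := by
    intro t i
    refine Finset.sum_congr rfl fun s _ => ?_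
    simp [Finset.sum_ite_eq]
  rw [Finset.sum_congr rfl fun t _ => Finset.sum_congr rfl fun i _ => by rw [this t i]]
  rw [Finset.sum_comm]
  refine Finset.sum_congr rfl fun i _ => ?_
  rw [← Finset.sum_mul, sq]

lemma sum_ite_lt (T c : ℕ) (hc : c ≤ T) :
    ∑ t : Fin T, (if (t:ℕ) < c then (-1:ℝ) else 1) = (T:ℝ) - 2*c := by
  rw [Fin.sum_univ_eq_sum_range (fun n => if n < c then (-1:ℝ) else 1), Finset.range_eq_Ico,
    ← Finset.sum_Ico_consecutive _ (Nat.zero_le c) hc]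
  rw [Finset.sum_congr rfl (fun x hx => if_pos (Finset.mem_Ico.mp hx).2),
    Finset.sum_congr rfl (fun x hx => if_neg (not_lt.mpr (Finset.mem_Ico.mp hx).1))]
  rw [Finset.sum_const, Finset.sum_const, Nat.card_Ico, Nat.card_Ico]
  rw [Nat.sub_zero, nsmul_eq_mul, nsmul_eq_mul, Nat.cast_sub hc]
  ring

lemma row_bound (T : ℕ) (v : Fin T → ℝ) (hv : ∀ t, v t = 1 ∨ v t = -1) :
    ((T % 2 : ℕ) : ℝ)^2 ≤ (∑ t, v t)^2 := by
  classical
  set k := (Finset.univ.filter (fun t => v t = -1)).card with hk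
  have hkT : k ≤ T := by
    simpa using (Finset.card_filter_le Finset.univ (fun t => v t = -1))
  have hsum : ∑ t, v t = (T : ℝ) - 2 * k := by
    have h1 : ∑ t, v t = ∑ t : Fin T, (if v t = -1 then (-1:ℝ) else 1) := by
      refine Finset.sum_congr rfl fun t _ => ?_
      rcases hv t with h | h
      · simp [h]
      · simp [h]
    rw [h1, Finset.sum_ite, Finset.sum_const, Finset.sum_const]
    have h2 : (Finset.univ.filter (fun t => ¬ v t = -1)).card = T - k := by
      have := Finset.card_filter_add_card_filter_not (s := (Finset.univ : Finset (Fin T)))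
        (p := fun t => v t = -1)
      simp only [Finset.card_univ, Fintype.card_fin] at this
      omega
    rw [h2, ← hk, nsmul_eq_mul, nsmul_eq_mul, Nat.cast_sub hkT]
    ring
  rw [hsum]
  have key : (((T % 2 : ℕ):ℤ))^2 ≤ ((T:ℤ) - 2*(k:ℤ))^2 := by
    have : ((T % 2 : ℕ):ℤ) = 0 ∨ (((T % 2 : ℕ):ℤ) = 1 ∧ ((T:ℤ) - 2*k ≤ -1 ∨ 1 ≤ (T:ℤ)-2*k)) := by
      omega
    rcases this with h | ⟨h1, h2 | h2⟩ <;> nlinarith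
  calc ((T % 2 : ℕ) : ℝ)^2 = (((((T % 2 : ℕ):ℤ))^2 : ℤ) : ℝ) := by norm_cast
    _ ≤ ((((T:ℤ) - 2*(k:ℤ))^2 : ℤ) : ℝ) := by exact_mod_cast key
    _ = ((T : ℝ) - 2 * k)^2 := by push_cast; ring

lemma force_all (N : ℕ) (f : Fin N → ℝ) (hf : ∀ i, f i = 1 ∨ f i = -1) (c : ℝ)
    (hc : c = 1 ∨ c = -1) (h : ∑ i, f i = (N:ℝ) * c) : ∀ i, f i = c := by
  classical
  have h0 : ∑ i, (1 - f i * c) = 0 := by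
    rw [Finset.sum_sub_distrib, ← Finset.sum_mul, h, Finset.sum_const, Finset.card_univ,
      Fintype.card_fin, nsmul_eq_mul, mul_one]
    rcases hc with h2 | h2 <;> rw [h2] <;> ring
  have hnn : ∀ i ∈ Finset.univ, (0:ℝ) ≤ 1 - f i * c := by
    intro i _
    rcases hf i with h1 | h1 <;> rcases hc with h2 | h2 <;> rw [h1, h2] <;> norm_num
  have := (Finset.sum_eq_zero_iff_of_nonneg hnn).mp h0
  intro i
  have hi := this i (Finset.mem_univ i)
  rcases hf i with h1 | h1 <;> rcases hc with h2 | h2 <;> rw [h1, h2] <;>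
    rw [h1, h2] at hi <;> norm_num at hi

/-- Unit fixed effects only: `zᵀΓ(ΓᵀΓ)⁻¹Γᵀz = T Σ_i ζ_i²`, and under the monotone
adoption constraint this is minimized exactly when every unit switches at halftime:
`ω_t = −1` for `t < (T+1)/2` and `ω_t = 1` for `t > (T+1)/2`. -/
theorem unit_fixed_effects_objective (N T : ℕ) (hN : 0 < N) (hT : 0 < T)
    (z : Fin T × Fin N → ℝ) (hz : ∀ q, z q = 1 ∨ z q = -1)
    (hmono : ∀ i : Fin N, Monotone fun t => z (t, i))
    (ζ : Fin N → ℝ) (hζ : ∀ i, ζ i = (1 / (T : ℝ)) * ∑ t, z (t, i))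
    (ω : Fin T → ℝ) (hω : ∀ t, ω t = (1 / (N : ℝ)) * ∑ i, z (t, i)) :
    unitQF N T z = (T : ℝ) * ∑ i, ζ i ^ 2 ∧
      ((∀ z' : Fin T × Fin N → ℝ, (∀ q, z' q = 1 ∨ z' q = -1) →
          (∀ i : Fin N, Monotone fun t => z' (t, i)) → unitQF N T z ≤ unitQF N T z')
        ↔ ∀ t : Fin T, (2 * ((t : ℕ) + 1) < T + 1 → ω t = -1) ∧
            (T + 1 < 2 * ((t : ℕ) + 1) → ω t = 1)) := by
  classical
  have hT' : (T:ℝ) ≠ 0 := Nat.cast_ne_zero.mpr hT.ne'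
  have hN' : (N:ℝ) ≠ 0 := Nat.cast_ne_zero.mpr hN.ne'
  set m : ℝ := ((T % 2 : ℕ) : ℝ) with hm
  have hm1 : m ^ 2 ≤ 1 := by
    have : T % 2 ≤ 1 := Nat.le_of_lt_succ (Nat.mod_lt T (by norm_num))
    have : m ≤ 1 := by rw [hm]; exact_mod_cast this
    nlinarith [show (0:ℝ) ≤ m from by rw [hm]; positivity]
  -- the sum over i of z(t,i), from ω
  have hωsum : ∀ t, ∑ i, z (t, i) = (N:ℝ) * ω t := by
    intro t
    rw [hω t]
    field_simp
  -- lower bound for all admissible designs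
  have hlow : ∀ w : Fin T × Fin N → ℝ, (∀ q, w q = 1 ∨ w q = -1) →
      (T:ℝ)⁻¹ * ((N:ℝ) * m^2) ≤ unitQF N T w := by
    intro w hw
    rw [unitQF_eq N T hT w]
    have : (N:ℝ) * m^2 ≤ ∑ i, (∑ t, w (t,i))^2 := by
      calc (N:ℝ) * m^2 = ∑ _i : Fin N, m^2 := by
            rw [Finset.sum_const, Finset.card_univ, Fintype.card_fin, nsmul_eq_mul]
        _ ≤ ∑ i, (∑ t, w (t,i))^2 :=
            Finset.sum_le_sum fun i _ => row_bound T (fun t => w (t,i)) (fun t => hw (t,i))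
    have hTnn : (0:ℝ) ≤ (T:ℝ)⁻¹ := by positivity
    exact mul_le_mul_of_nonneg_left this hTnn
  -- the halftime design
  set zh : Fin T × Fin N → ℝ := fun q => if (q.1:ℕ) < T/2 then -1 else 1 with hzh
  have hzh_pm : ∀ q, zh q = 1 ∨ zh q = -1 := by
    intro q
    by_cases h : (q.1:ℕ) < T/2 <;> simp [hzh, h]
  have hzh_mono : ∀ i : Fin N, Monotone fun t => zh (t, i) := by
    intro i s t hst
    have hst' : (s:ℕ) ≤ (t:ℕ) := hst
    simp only [hzh]
    split_ifs with h1 h2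
    · exact le_refl _
    · norm_num
    · exfalso; omega
    · exact le_refl _
  have hzh_val : unitQF N T zh = (T:ℝ)⁻¹ * ((N:ℝ) * m^2) := by
    rw [unitQF_eq N T hT zh]
    have hc : T/2 ≤ T := Nat.div_le_self T 2
    have hrow : ∀ i : Fin N, ∑ t, zh (t,i) = m := by
      intro i
      have := sum_ite_lt T (T/2) hc
      have hmod : (T:ℝ) - 2*((T/2:ℕ):ℝ) = m := by
        have h2 : T % 2 + 2 * (T / 2) = T := Nat.mod_add_div T 2
        have h3 : ((T % 2 : ℕ):ℝ) + 2 * ((T/2 : ℕ):ℝ) = (T:ℝ) := by exact_mod_cast h2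
        rw [hm]; linarith
      rw [← hmod, ← this]
    rw [Finset.sum_congr rfl fun i _ => by rw [hrow i]]
    rw [Finset.sum_const, Finset.card_univ, Fintype.card_fin, nsmul_eq_mul]
  refine ⟨?_, ?_⟩
  · -- value identity
    rw [unitQF_eq N T hT z, Finset.mul_sum, Finset.mul_sum]
    refine Finset.sum_congr rfl fun i _ => ?_
    rw [hζ i]
    field_simp
  constructor
  · -- minimality ⟹ halftime pattern
    intro hmin t
    have hle : unitQF N T z ≤ (T:ℝ)⁻¹ * ((N:ℝ) * m^2) := by
      rw [← hzh_val]; exact hmin zh hzh_pm hzh_mono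
    rw [unitQF_eq N T hT z] at hle
    have hsum_le : ∑ i, (∑ s, z (s,i))^2 ≤ (N:ℝ) * m^2 := by
      have hTpos : (0:ℝ) < (T:ℝ)⁻¹ := by positivity
      nlinarith [hle]
    -- single bad unit gives contradiction
    have key : ∀ (i0 : Fin N), ¬ ((2:ℝ) ≤ |∑ s, z (s,i0)|) := by
      intro i0 hbad
      have h4 : (4:ℝ) ≤ (∑ s, z (s,i0))^2 := by
        have := sq_abs (∑ s, z (s,i0))
        nlinarith [hbad]
      have hrest : ∀ j ∈ Finset.univ.erase i0, m^2 ≤ (∑ s, z (s,j))^2 := fun j _ =>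
        row_bound T (fun s => z (s,j)) (fun s => hz (s,j))
      have hsplit : ∑ i, (∑ s, z (s,i))^2
          = (∑ s, z (s,i0))^2 + ∑ j ∈ Finset.univ.erase i0, (∑ s, z (s,j))^2 :=
        (Finset.add_sum_erase _ _ (Finset.mem_univ i0)).symm
      have hcard : (Finset.univ.erase i0).card = N - 1 := by
        rw [Finset.card_erase_of_mem (Finset.mem_univ i0), Finset.card_univ, Fintype.card_fin]
      have h5 : ((N:ℝ) - 1) * m^2 ≤ ∑ j ∈ Finset.univ.erase i0, (∑ s, z (s,j))^2 := by
        calc ((N:ℝ) - 1) * m^2 = ∑ _j ∈ Finset.univ.erase i0, m^2 := by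
              rw [Finset.sum_const, hcard, nsmul_eq_mul, Nat.cast_sub hN]
              push_cast; ring
          _ ≤ _ := Finset.sum_le_sum hrest
      nlinarith [hsum_le, hsplit ▸ (by nlinarith : (4:ℝ) + ((N:ℝ)-1)*m^2 ≤ ∑ i, (∑ s, z (s,i))^2)]
    constructor
    · intro ht
      have hall : ∀ i, z (t, i) = -1 := by
        intro i
        rcases hz (t, i) with h1 | h1
        · exfalso
          apply key i
          have hup : ∀ s : Fin T, (if (s:ℕ) < (t:ℕ) then (-1:ℝ) else 1) ≤ z (s, i) := by
            intro s
            split_ifs with hs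
            · rcases hz (s,i) with h2 | h2 <;> rw [h2] <;> norm_num
            · have : t ≤ s := by
                rw [Fin.le_def]; omega
              have := (hmono i) this
              simp only at this
              rw [h1] at this
              linarith
          have hS : (T:ℝ) - 2*(t:ℕ) ≤ ∑ s, z (s,i) := by
            rw [← sum_ite_lt T (t:ℕ) (le_of_lt t.isLt)]
            exact Finset.sum_le_sum fun s _ => hup s
          have h2t : (2:ℝ) ≤ (T:ℝ) - 2*(t:ℕ) := by
            have : 2*(t:ℕ) + 2 ≤ T := by omega
            have := (Nat.cast_le (α := ℝ)).mpr this
            push_cast at this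
            linarith
          rw [abs_of_nonneg (by linarith)]
          linarith
        · exact h1
      rw [hω t, Finset.sum_congr rfl fun i _ => hall i, Finset.sum_const, Finset.card_univ,
        Fintype.card_fin, nsmul_eq_mul]
      field_simp
    · intro ht
      have hall : ∀ i, z (t, i) = 1 := by
        intro i
        rcases hz (t, i) with h1 | h1
        · exact h1
        · exfalso
          apply key i
          have hc : (t:ℕ) + 1 ≤ T := t.isLt
          have hup : ∀ s : Fin T, z (s, i) ≤ (if (s:ℕ) < (t:ℕ)+1 then (-1:ℝ) else 1) := by
            intro s
            split_ifs with hs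
            · have : s ≤ t := by rw [Fin.le_def]; omega
              have := (hmono i) this
              simp only at this
              rw [h1] at this
              linarith
            · rcases hz (s,i) with h2 | h2 <;> rw [h2] <;> norm_num
          have hS : ∑ s, z (s,i) ≤ (T:ℝ) - 2*((((t:ℕ)+1 : ℕ)):ℝ) := by
            rw [← sum_ite_lt T ((t:ℕ)+1) hc]
            exact Finset.sum_le_sum fun s _ => hup s
          have h2t : (T:ℝ) - 2*((((t:ℕ)+1 : ℕ)):ℝ) ≤ -2 := by
            have h6 : T + 2 ≤ 2*((t:ℕ)+1) := by omega
            have h7 := (Nat.cast_le (α := ℝ)).mpr h6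
            push_cast at h7 ⊢
            linarith
          rw [abs_of_nonpos (by linarith)]
          linarith
      rw [hω t, Finset.sum_congr rfl fun i _ => hall i, Finset.sum_const, Finset.card_univ,
        Fintype.card_fin, nsmul_eq_mul]
      field_simp
  · -- halftime pattern ⟹ minimality
    intro hpat z' hz' hmono'
    -- forcing from the pattern
    have hneg : ∀ t : Fin T, 2 * ((t:ℕ) + 1) < T + 1 → ∀ i, z (t,i) = -1 := by
      intro t ht i
      have hωt := (hpat t).1 ht
      have : ∑ i, z (t,i) = (N:ℝ) * (-1) := by rw [hωsum t, hωt]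
      exact force_all N (fun i => z (t,i)) (fun i => hz (t,i)) (-1) (Or.inr rfl) this i
    have hpos : ∀ t : Fin T, T + 1 < 2 * ((t:ℕ) + 1) → ∀ i, z (t,i) = 1 := by
      intro t ht i
      have hωt := (hpat t).2 ht
      have : ∑ i, z (t,i) = (N:ℝ) * 1 := by rw [hωsum t, hωt]
      exact force_all N (fun i => z (t,i)) (fun i => hz (t,i)) 1 (Or.inl rfl) this i
    -- each row sum squared equals m^2
    have hrow : ∀ i : Fin N, (∑ s, z (s,i))^2 = m^2 := by
      intro i
      set S : ℝ := ∑ s, z (s,i) with hS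
      have hrev : ∑ s : Fin T, z (s.rev, i) = S := by
        rw [hS]
        simpa using Equiv.sum_comp Fin.revPerm (fun s => z (s, i))
      have h2S : S + S = ∑ s : Fin T, (if 2*((s:ℕ)+1) = T+1 then 2 * z (s,i) else 0) := by
        have : S + S = ∑ s : Fin T, (z (s,i) + z (s.rev, i)) := by
          rw [Finset.sum_add_distrib, hrev]
        rw [this]
        refine Finset.sum_congr rfl fun s _ => ?_
        have hrevval : ((s.rev : Fin T) : ℕ) = T - ((s:ℕ)+1) := Fin.val_rev s
        have hsl : (s:ℕ) < T := s.isLt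
        rcases lt_trichotomy (2*((s:ℕ)+1)) (T+1) with hlt | heq | hgt
        · rw [if_neg (by omega), hneg s hlt i, hpos s.rev (by omega) i]
          ring
        · have hfix : s.rev = s := Fin.ext (by omega)
          rw [if_pos heq, hfix]
          ring
        · rw [if_neg (by omega), hpos s hgt i, hneg s.rev (by omega) i]
          ring
      rcases Nat.even_or_odd T with hev | hodd
      · have hmod : T % 2 = 0 := Nat.even_iff.mp hev
        have hz0 : S + S = 0 := by
          rw [h2S]
          refine Finset.sum_eq_zero fun s _ => if_neg (by omega)
        have : S = 0 := by linarith
        rw [hS] at this ⊢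
        rw [this, hm, hmod]
        norm_num
      · have hmod : T % 2 = 1 := Nat.odd_iff.mp hodd
        have hmidlt : T/2 < T := Nat.div_lt_self hT (by norm_num)
        set mid : Fin T := ⟨T/2, hmidlt⟩ with hmid
        have hfilt : Finset.univ.filter (fun s : Fin T => 2*((s:ℕ)+1) = T+1) = {mid} := by
          refine Finset.eq_singleton_iff_unique_mem.mpr ⟨?_, ?_⟩
          · simp only [Finset.mem_filter, Finset.mem_univ, true_and, hmid]
            omega
          · intro s hs
            simp only [Finset.mem_filter, Finset.mem_univ, true_and] at hs
            exact Fin.ext (by simp only [hmid]; omega)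
        have h2S' : S + S = 2 * z (mid, i) := by
          rw [h2S, ← Finset.sum_filter, hfilt, Finset.sum_singleton]
        have hSval : S = z (mid, i) := by linarith
        have : S^2 = 1 := by
          rcases hz (mid, i) with h | h <;> rw [hSval, h] <;> norm_num
        rw [hS] at this
        rw [this, hm, hmod]
        norm_num
    -- conclude
    have hval : unitQF N T z = (T:ℝ)⁻¹ * ((N:ℝ) * m^2) := by
      rw [unitQF_eq N T hT z, Finset.sum_congr rfl fun i _ => hrow i,
        Finset.sum_const, Finset.card_univ, Fintype.card_fin, nsmul_eq_mul]
    rw [hval]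
    exact hlow z' hz'
end

section
/- (Reversible treatment, two-way fixed effects) In the model Y_{it} = α_i + β_t + τ z_{it} + ε_{it} with z_{it} ∈ {−1,1} and no monotonicity constraint, the OLS variance objective zᵀΓ(ΓᵀΓ)^{-1}Γᵀz = T Σ_i ζ_i² − (N/T)(Σ_t ω_t)² + N Σ_t ω_t² is minimized by any design with ω_t = 0 for all t and ζ_i = 0 for all i, where ω_t = (1/N)Σ_i z_{it} and ζ_i = (1/T)Σ_t z_{it}. -/
open Finset

/-- The OLS variance objective for the two-way fixed-effects model,
`Q(z) = T Σ_i ζ_i² − (N/T)(Σ_t ω_t)² + N Σ_t ω_t²`, where `ζ_i = (1/T)Σ_t z_{it}` and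
`ω_t = (1/N)Σ_i z_{it}`. -/
noncomputable def twoWayQF (N T : ℕ) (z : Fin N → Fin T → ℝ) : ℝ :=
  (T : ℝ) * (∑ i : Fin N, ((1 / (T : ℝ)) * ∑ t, z i t) ^ 2)
    - ((N : ℝ) / (T : ℝ)) * (∑ t : Fin T, (1 / (N : ℝ)) * ∑ i, z i t) ^ 2
    + (N : ℝ) * ∑ t : Fin T, ((1 / (N : ℝ)) * ∑ i, z i t) ^ 2

/-- Reversible treatment, two-way fixed effects: the objective
`zᵀΓ(ΓᵀΓ)⁻¹Γᵀz = T Σ_i ζ_i² − (N/T)(Σ_t ω_t)² + N Σ_t ω_t²` is minimized (over all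
`±1`-valued designs, with no monotonicity constraint) by any design with `ω_t = 0`
for all `t` and `ζ_i = 0` for all `i`. -/
theorem reversible_two_way_optimal (N T : ℕ) (hN : 0 < N) (hT : 0 < T)
    (z : Fin N → Fin T → ℝ) (hz : ∀ i t, z i t = 1 ∨ z i t = -1)
    (hω : ∀ t : Fin T, ((1 / (N : ℝ)) * ∑ i, z i t) = 0)
    (hζ : ∀ i : Fin N, ((1 / (T : ℝ)) * ∑ t, z i t) = 0) :
    ∀ z' : Fin N → Fin T → ℝ, (∀ i t, z' i t = 1 ∨ z' i t = -1) →
      twoWayQF N T z ≤ twoWayQF N T z' := by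
  intro z' _
  have hz0 : twoWayQF N T z = 0 := by
    have hζ' := hζ; have hω' := hω
    simp only [one_div] at hζ' hω'
    unfold twoWayQF
    simp [hζ', hω']
  rw [hz0]
  have hcs : (∑ t : Fin T, (1 / (N : ℝ)) * ∑ i, z' i t) ^ 2
      ≤ (T : ℝ) * ∑ t : Fin T, ((1 / (N : ℝ)) * ∑ i, z' i t) ^ 2 := by
    have := sq_sum_le_card_mul_sum_sq (s := (univ : Finset (Fin T)))
      (f := fun t => (1 / (N : ℝ)) * ∑ i, z' i t)
    simpa using this
  have hT' : (0 : ℝ) < T := by exact_mod_cast hT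
  have hN' : (0 : ℝ) ≤ N := by positivity
  have h1 : (0 : ℝ) ≤ (T : ℝ) * (∑ i : Fin N, ((1 / (T : ℝ)) * ∑ t, z' i t) ^ 2) := by
    positivity
  have h2 : ((N : ℝ) / (T : ℝ)) * (∑ t : Fin T, (1 / (N : ℝ)) * ∑ i, z' i t) ^ 2
      ≤ (N : ℝ) * ∑ t : Fin T, ((1 / (N : ℝ)) * ∑ i, z' i t) ^ 2 := by
    rw [div_mul_eq_mul_div, div_le_iff₀ hT']
    calc (N : ℝ) * (∑ t : Fin T, (1 / (N : ℝ)) * ∑ i, z' i t) ^ 2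
        ≤ (N : ℝ) * ((T : ℝ) * ∑ t : Fin T, ((1 / (N : ℝ)) * ∑ i, z' i t) ^ 2) :=
          mul_le_mul_of_nonneg_left hcs hN'
      _ = (N : ℝ) * (∑ t : Fin T, ((1 / (N : ℝ)) * ∑ i, z' i t) ^ 2) * T := by ring
  unfold twoWayQF
  linarith
end

section
/- (Singular value thresholding solves nuclear-norm proximal step) Let Y ∈ ℝ^{N×T} have SVD Y = U D Vᵀ with singular values σ_1 ≥ ⋯ ≥ σ_{min(N,T)}. Then for μ > 0, the minimizer of (1/2)‖Y − L‖_F² + μ‖L‖_* over all matrices L is L̂ = U S_μ(D) Vᵀ, where S_μ(D) replaces each singular value σ_i by max(σ_i − μ, 0). -/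
open Finset Matrix

/-- Squared Frobenius norm `‖A‖_F² = Σ_{i,j} A_{ij}²`. -/
noncomputable def frobSq {N T : ℕ} (A : Matrix (Fin N) (Fin T) ℝ) : ℝ :=
  ∑ i, ∑ j, A i j ^ 2

/-- The nuclear norm of a real matrix: the sum of its singular values, i.e. the sum of
the square roots of the eigenvalues of `LᴴL`. -/
noncomputable def nuclearNorm {N T : ℕ} (L : Matrix (Fin N) (Fin T) ℝ) : ℝ :=
  ∑ j, Real.sqrt ((Matrix.isHermitian_conjTranspose_mul_self L).eigenvalues j)


/-- `W := eigenvectorUnitary` facts over ℝ. -/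
lemma W_spec {n : ℕ} {H : Matrix (Fin n) (Fin n) ℝ} (h : H.IsHermitian) :
    (h.eigenvectorUnitary : Matrix (Fin n) (Fin n) ℝ)ᵀ * h.eigenvectorUnitary = 1 ∧
    (h.eigenvectorUnitary : Matrix (Fin n) (Fin n) ℝ) *
      (h.eigenvectorUnitary : Matrix (Fin n) (Fin n) ℝ)ᵀ = 1 ∧
    H * (h.eigenvectorUnitary : Matrix (Fin n) (Fin n) ℝ)
      = (h.eigenvectorUnitary : Matrix (Fin n) (Fin n) ℝ) * diagonal h.eigenvalues := by
  have hst : star (h.eigenvectorUnitary : Matrix (Fin n) (Fin n) ℝ)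
      = (h.eigenvectorUnitary : Matrix (Fin n) (Fin n) ℝ)ᵀ := by
    rw [Matrix.star_eq_conjTranspose, conjTranspose_eq_transpose_of_trivial]
  have h1 : star (h.eigenvectorUnitary : Matrix (Fin n) (Fin n) ℝ) *
      (h.eigenvectorUnitary : Matrix (Fin n) (Fin n) ℝ) = 1 :=
    Unitary.coe_star_mul_self h.eigenvectorUnitary
  have h2 : (h.eigenvectorUnitary : Matrix (Fin n) (Fin n) ℝ) *
      star (h.eigenvectorUnitary : Matrix (Fin n) (Fin n) ℝ) = 1 :=
    Unitary.coe_mul_star_self h.eigenvectorUnitary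
  have hd : diagonal (RCLike.ofReal ∘ h.eigenvalues) = diagonal h.eigenvalues := by congr 1
  refine ⟨by rw [← hst]; exact h1, by rw [← hst]; exact h2, ?_⟩
  calc H * (h.eigenvectorUnitary : Matrix (Fin n) (Fin n) ℝ)
      = ((h.eigenvectorUnitary : Matrix (Fin n) (Fin n) ℝ) * diagonal (RCLike.ofReal ∘ h.eigenvalues)
          * star (h.eigenvectorUnitary : Matrix (Fin n) (Fin n) ℝ))
          * (h.eigenvectorUnitary : Matrix (Fin n) (Fin n) ℝ) := by exact congrArg (· * _) h.spectral_theorem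
    _ = _ := by rw [mul_assoc, h1, mul_one, hd]

/-- Master lemma: doubly stochastic-type transport of a function along a matrix
intertwining two diagonal families. -/
lemma key_sum {m n : ℕ} (C : Matrix (Fin m) (Fin n) ℝ) (α : Fin m → ℝ) (β : Fin n → ℝ)
    (hrow : ∀ a, ∑ j, C a j ^ 2 = 1) (hcol : ∀ j, ∑ a, C a j ^ 2 = 1)
    (hrel : ∀ a j, α a * C a j = C a j * β j) (F : ℝ → ℝ) :
    ∑ a, F (α a) = ∑ j, F (β j) := by
  have key : ∀ a j, F (α a) * C a j ^ 2 = F (β j) * C a j ^ 2 := by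
    intro a j
    by_cases hC : C a j = 0
    · simp [hC]
    · have : α a = β j := by
        have := hrel a j
        rw [mul_comm (C a j) (β j)] at this
        exact mul_right_cancel₀ hC this
      rw [this]
  calc ∑ a, F (α a) = ∑ a, ∑ j, F (α a) * C a j ^ 2 := by
        simp [← Finset.mul_sum, hrow]
    _ = ∑ a, ∑ j, F (β j) * C a j ^ 2 := by
        exact Finset.sum_congr rfl fun a _ => Finset.sum_congr rfl fun j _ => key a j
    _ = ∑ j, ∑ a, F (β j) * C a j ^ 2 := Finset.sum_comm
    _ = ∑ j, F (β j) := by simp [← Finset.mul_sum, hcol]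

lemma eig_congr {n : ℕ} {A B : Matrix (Fin n) (Fin n) ℝ} (h : A = B)
    (hA : A.IsHermitian) (hB : B.IsHermitian) : hA.eigenvalues = hB.eigenvalues := by
  subst h; rfl

/-- Sum of `F` of eigenvalues is invariant under orthogonal conjugation. -/
lemma sum_eigen_conj {n : ℕ} (F : ℝ → ℝ) (H V : Matrix (Fin n) (Fin n) ℝ) (hV : Vᵀ * V = 1)
    (h1 : H.IsHermitian) (h2 : (V * H * Vᵀ).IsHermitian) :
    ∑ k, F (h2.eigenvalues k) = ∑ j, F (h1.eigenvalues j) := by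
  obtain ⟨hW1tW1, hW1W1t, hHW1⟩ := W_spec h1
  obtain ⟨hW2tW2, hW2W2t, hHW2⟩ := W_spec h2
  set W1 : Matrix (Fin n) (Fin n) ℝ := (h1.eigenvectorUnitary : Matrix (Fin n) (Fin n) ℝ) with hW1def
  set W2 : Matrix (Fin n) (Fin n) ℝ := (h2.eigenvectorUnitary : Matrix (Fin n) (Fin n) ℝ) with hW2def
  have hVVt : V * Vᵀ = 1 := mul_eq_one_comm.mp hV
  set C : Matrix (Fin n) (Fin n) ℝ := W2ᵀ * V * W1 with hCdef
  have hHsymm : Hᵀ = H := by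
    have := h1; rwa [Matrix.IsHermitian, conjTranspose_eq_transpose_of_trivial] at this
  have hCtC : Cᵀ * C = 1 := by
    have : Cᵀ = W1ᵀ * Vᵀ * W2 := by
      rw [hCdef, Matrix.transpose_mul, Matrix.transpose_mul, transpose_transpose, mul_assoc]
    rw [this, hCdef]
    calc W1ᵀ * Vᵀ * W2 * (W2ᵀ * V * W1)
        = W1ᵀ * Vᵀ * (W2 * W2ᵀ) * V * W1 := by noncomm_ring
      _ = W1ᵀ * (Vᵀ * V) * W1 := by rw [hW2W2t]; noncomm_ring
      _ = 1 := by rw [hV, mul_one, hW1tW1]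
  have hCCt : C * Cᵀ = 1 := by
    have hct : Cᵀ = W1ᵀ * Vᵀ * W2 := by
      rw [hCdef, Matrix.transpose_mul, Matrix.transpose_mul, transpose_transpose, mul_assoc]
    rw [hct, hCdef]
    calc W2ᵀ * V * W1 * (W1ᵀ * Vᵀ * W2)
        = W2ᵀ * V * (W1 * W1ᵀ) * Vᵀ * W2 := by noncomm_ring
      _ = W2ᵀ * (V * Vᵀ) * W2 := by rw [hW1W1t]; noncomm_ring
      _ = 1 := by rw [hVVt, mul_one, hW2tW2]
  have hrel : diagonal h2.eigenvalues * C = C * diagonal h1.eigenvalues := by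
    have hH2symm : (V * H * Vᵀ)ᵀ = V * H * Vᵀ := by
      have := h2; rwa [Matrix.IsHermitian, conjTranspose_eq_transpose_of_trivial] at this
    have hd2 : diagonal h2.eigenvalues * W2ᵀ = W2ᵀ * (V * H * Vᵀ) := by
      have h' := congrArg Matrix.transpose hHW2
      rw [Matrix.transpose_mul, hH2symm, Matrix.transpose_mul, Matrix.diagonal_transpose] at h'
      exact h'.symm
    calc diagonal h2.eigenvalues * C = (diagonal h2.eigenvalues * W2ᵀ) * (V * W1) := by
          rw [hCdef]; noncomm_ring
      _ = W2ᵀ * (V * H * Vᵀ) * (V * W1) := by rw [hd2]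
      _ = W2ᵀ * V * H * (Vᵀ * V) * W1 := by noncomm_ring
      _ = W2ᵀ * V * (H * W1) := by rw [hV]; noncomm_ring
      _ = W2ᵀ * V * W1 * diagonal h1.eigenvalues := by rw [hHW1]; noncomm_ring
      _ = C * diagonal h1.eigenvalues := by rw [hCdef]
  apply key_sum C h2.eigenvalues h1.eigenvalues
  · intro a
    have := congrFun (congrFun hCCt a) a
    simpa [Matrix.mul_apply, Matrix.one_apply, sq] using this
  · intro j
    have := congrFun (congrFun hCtC j) j
    simpa [Matrix.mul_apply, Matrix.one_apply, sq] using this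
  · intro a j
    have := congrFun (congrFun hrel a) j
    simpa [Matrix.diagonal_mul, Matrix.mul_diagonal] using this

-- helper: sum over Fin N of an if picking out one natural index
lemma sum_fin_ite {N : ℕ} (c : ℕ → ℝ) (j : ℕ) :
    (∑ i : Fin N, if (i : ℕ) = j then c (i : ℕ) else 0) = if j < N then c j else 0 := by
  split_ifs with h
  · rw [Finset.sum_eq_single (⟨j, h⟩ : Fin N)]
    · simp
    · intro b _ hb
      rw [if_neg]
      intro hbj
      exact hb (Fin.ext hbj)
    · simp
  · apply Finset.sum_eq_zero
    intro i _
    rw [if_neg]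
    intro hij
    exact h (hij ▸ i.isLt)

lemma sum_fin_ite' {N : ℕ} (c : ℕ → ℝ) (j : ℕ) :
    (∑ i : Fin N, if j = (i : ℕ) then c (i : ℕ) else 0) = if j < N then c j else 0 := by
  rw [← sum_fin_ite c j]
  apply Finset.sum_congr rfl
  intro i _
  by_cases hij : (i : ℕ) = j
  · rw [if_pos hij, if_pos hij.symm]
  · rw [if_neg hij, if_neg (fun hh => hij hh.symm)]

-- frobSq invariance
lemma frobSq_eq_trace {N T : ℕ} (A : Matrix (Fin N) (Fin T) ℝ) :
    frobSq A = Matrix.trace (Aᵀ * A) := by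
  rw [frobSq, Finset.sum_comm]
  simp [Matrix.trace, Matrix.mul_apply, Matrix.diag, sq]

lemma frobSq_conj {N T : ℕ} (U : Matrix (Fin N) (Fin N) ℝ) (V : Matrix (Fin T) (Fin T) ℝ)
    (hU : Uᵀ * U = 1) (hV : Vᵀ * V = 1) (A : Matrix (Fin N) (Fin T) ℝ) :
    frobSq (U * A * Vᵀ) = frobSq A := by
  rw [frobSq_eq_trace, frobSq_eq_trace]
  have h1 : (U * A * Vᵀ)ᵀ * (U * A * Vᵀ) = V * (Aᵀ * A) * Vᵀ := by
    rw [Matrix.transpose_mul, Matrix.transpose_mul, Matrix.transpose_transpose]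
    calc V * (Aᵀ * Uᵀ) * (U * A * Vᵀ) = V * (Aᵀ * ((Uᵀ * U) * (A * Vᵀ))) := by
          simp only [Matrix.mul_assoc]
      _ = V * (Aᵀ * A) * Vᵀ := by rw [hU, Matrix.one_mul]; simp only [Matrix.mul_assoc]
  rw [h1, Matrix.trace_mul_comm (V * (Aᵀ * A)) Vᵀ, ← Matrix.mul_assoc, hV, Matrix.one_mul]

-- eigenvalue sums of a diagonal matrix
lemma sum_eigen_diagonal {n : ℕ} (F : ℝ → ℝ) (g : Fin n → ℝ)
    (h : (Matrix.diagonal g).IsHermitian) :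
    ∑ j, F (h.eigenvalues j) = ∑ a, F (g a) := by
  obtain ⟨hWtW, hWWt, hHW⟩ := W_spec h
  set W : Matrix (Fin n) (Fin n) ℝ := (h.eigenvectorUnitary : Matrix (Fin n) (Fin n) ℝ) with hWdef
  refine (key_sum W g h.eigenvalues ?_ ?_ ?_ F).symm
  · intro a
    have := congrFun (congrFun hWWt a) a
    simpa [Matrix.mul_apply, Matrix.one_apply, sq] using this
  · intro j
    have := congrFun (congrFun hWtW j) j
    simpa [Matrix.mul_apply, Matrix.one_apply, sq] using this
  · intro a j
    have := congrFun (congrFun hHW a) j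
    simpa [Matrix.diagonal_mul, Matrix.mul_diagonal] using this

-- nuclear norm invariance under orthogonal conjugation
lemma nuclearNorm_conj {N T : ℕ} (U : Matrix (Fin N) (Fin N) ℝ) (V : Matrix (Fin T) (Fin T) ℝ)
    (hU : Uᵀ * U = 1) (hV : Vᵀ * V = 1) (A : Matrix (Fin N) (Fin T) ℝ) :
    nuclearNorm (U * A * Vᵀ) = nuclearNorm A := by
  have hGram : (U * A * Vᵀ)ᴴ * (U * A * Vᵀ) = V * (Aᴴ * A) * Vᵀ := by
    rw [Matrix.conjTranspose_eq_transpose_of_trivial, Matrix.conjTranspose_eq_transpose_of_trivial,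
      Matrix.transpose_mul, Matrix.transpose_mul, Matrix.transpose_transpose]
    calc V * (Aᵀ * Uᵀ) * (U * A * Vᵀ) = V * (Aᵀ * ((Uᵀ * U) * (A * Vᵀ))) := by
          simp only [Matrix.mul_assoc]
      _ = V * (Aᵀ * A) * Vᵀ := by rw [hU, Matrix.one_mul]; simp only [Matrix.mul_assoc]
  have h2 : (V * (Aᴴ * A) * Vᵀ).IsHermitian := hGram ▸ Matrix.isHermitian_conjTranspose_mul_self _
  rw [nuclearNorm, nuclearNorm]
  rw [show (Matrix.isHermitian_conjTranspose_mul_self (U * A * Vᵀ)).eigenvalues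
      = h2.eigenvalues from eig_congr hGram _ _]
  exact sum_eigen_conj Real.sqrt (Aᴴ * A) V hV (Matrix.isHermitian_conjTranspose_mul_self A) h2

lemma diag_abs_le_nuclearNorm {N T : ℕ} (M : Matrix (Fin N) (Fin T) ℝ) :
    (∑ i : Fin N, ∑ j : Fin T, if (i : ℕ) = (j : ℕ) then |M i j| else 0) ≤ nuclearNorm M := by
  set h := Matrix.isHermitian_conjTranspose_mul_self M with hdef
  set lam := h.eigenvalues with hlam
  have hlam0 : ∀ j, 0 ≤ lam j := fun j => Matrix.eigenvalues_conjTranspose_mul_self_nonneg M j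
  obtain ⟨hWtW, hWWt, hHW⟩ := W_spec h
  set W : Matrix (Fin T) (Fin T) ℝ := (h.eigenvectorUnitary : Matrix (Fin T) (Fin T) ℝ) with hWdef
  set P : Matrix (Fin N) (Fin T) ℝ := M * W with hPdef
  -- column norms of P are eigenvalues
  have hPtP : Pᵀ * P = Matrix.diagonal lam := by
    have hMt : Mᵀ = Mᴴ := (Matrix.conjTranspose_eq_transpose_of_trivial M).symm
    calc Pᵀ * P = Wᵀ * Mᵀ * (M * W) := by rw [hPdef, Matrix.transpose_mul]
      _ = Wᵀ * (Mᴴ * M * W) := by rw [hMt]; simp only [Matrix.mul_assoc]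
      _ = Wᵀ * (W * Matrix.diagonal lam) := by rw [hHW]
      _ = Matrix.diagonal lam := by rw [← Matrix.mul_assoc, hWtW, Matrix.one_mul]
  have hPcol : ∀ j, ∑ a, P a j ^ 2 = lam j := by
    intro j
    have := congrFun (congrFun hPtP j) j
    simpa [Matrix.mul_apply, Matrix.diagonal, sq] using this
  have hWcol : ∀ j, ∑ b, W b j ^ 2 = 1 := by
    intro j
    have := congrFun (congrFun hWtW j) j
    simpa [Matrix.mul_apply, Matrix.one_apply, sq] using this
  have hMrec : ∀ a b, M a b = ∑ j, P a j * W b j := by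
    intro a b
    have : M = P * Wᵀ := by
      rw [hPdef, Matrix.mul_assoc, hWWt, Matrix.mul_one]
    calc M a b = (P * Wᵀ) a b := by rw [← this]
      _ = ∑ j, P a j * W b j := by simp [Matrix.mul_apply]
  -- the factorization
  set c : Fin T → ℝ := fun j => Real.sqrt (Real.sqrt (lam j)) with hcdef
  have hcsq : ∀ j, c j ^ 2 = Real.sqrt (lam j) := fun j =>
    Real.sq_sqrt (Real.sqrt_nonneg _)
  have hcne : ∀ j, lam j ≠ 0 → c j ≠ 0 := by
    intro j hj
    have hl : 0 < lam j := lt_of_le_of_ne (hlam0 j) (Ne.symm hj)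
    exact ne_of_gt (Real.sqrt_pos.mpr (Real.sqrt_pos.mpr hl))
  set A : Fin T → Fin N → ℝ := fun j a => if lam j = 0 then 0 else P a j / c j with hAdef
  set B : Fin T → Fin T → ℝ := fun j b => c j * W b j with hBdef
  have hPzero : ∀ j, lam j = 0 → ∀ a, P a j = 0 := by
    intro j hj a
    have hsum : ∑ a, P a j ^ 2 = 0 := by rw [hPcol j, hj]
    have := (Finset.sum_eq_zero_iff_of_nonneg (fun a _ => sq_nonneg (P a j))).mp hsum a
      (Finset.mem_univ a)
    exact pow_eq_zero_iff (by norm_num) |>.mp this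
  have hfact : ∀ a b, M a b = ∑ j, A j a * B j b := by
    intro a b
    rw [hMrec a b]
    apply Finset.sum_congr rfl
    intro j _
    by_cases hj : lam j = 0
    · simp [hAdef, hBdef, hj, hPzero j hj a]
    · have hc := hcne j hj
      simp only [hAdef, hBdef, if_neg hj]
      field_simp
  have hAsum : ∀ j, ∑ a, A j a ^ 2 = Real.sqrt (lam j) := by
    intro j
    by_cases hj : lam j = 0
    · simp [hAdef, hj]
    · have hc := hcne j hj
      have : ∑ a, A j a ^ 2 = (∑ a, P a j ^ 2) / c j ^ 2 := by
        rw [Finset.sum_div]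
        apply Finset.sum_congr rfl
        intro a _
        simp [hAdef, hj, div_pow]
      rw [this, hPcol j, hcsq j]
      rw [← Real.mul_self_sqrt (hlam0 j)]
      rw [Real.sqrt_mul_self (Real.sqrt_nonneg _), mul_div_assoc, div_self (Real.sqrt_ne_zero'.mpr (lt_of_le_of_ne (hlam0 j) (Ne.symm hj))), mul_one]
  have hBsum : ∀ j, ∑ b, B j b ^ 2 = Real.sqrt (lam j) := by
    intro j
    have : ∑ b, B j b ^ 2 = c j ^ 2 * ∑ b, W b j ^ 2 := by
      rw [Finset.mul_sum]
      apply Finset.sum_congr rfl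
      intro b _
      simp [hBdef]; ring
    rw [this, hWcol j, mul_one, hcsq j]
  -- pointwise bound
  have habs : ∀ (a : Fin N) (b : Fin T),
      |M a b| ≤ ∑ j, (A j a ^ 2 + B j b ^ 2) / 2 := by
    intro a b
    rw [hfact a b]
    refine (Finset.abs_sum_le_sum_abs _ _).trans (Finset.sum_le_sum ?_)
    intro j _
    rw [abs_mul]
    nlinarith [sq_nonneg (|A j a| - |B j b|), sq_abs (A j a), sq_abs (B j b),
      abs_nonneg (A j a), abs_nonneg (B j b)]
  have hnuc : nuclearNorm M = ∑ j, Real.sqrt (lam j) := rfl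
  -- assemble
  calc ∑ i : Fin N, ∑ j : Fin T, (if (i : ℕ) = (j : ℕ) then |M i j| else 0)
      ≤ ∑ i : Fin N, ∑ j : Fin T, (if (i : ℕ) = (j : ℕ)
          then (∑ k, A k i ^ 2 / 2) + (∑ k, B k j ^ 2 / 2) else 0) := by
        apply Finset.sum_le_sum; intro i _
        apply Finset.sum_le_sum; intro j _
        split_ifs with hij
        · refine (habs i j).trans (le_of_eq ?_)
          rw [← Finset.sum_add_distrib]
          apply Finset.sum_congr rfl
          intro k _
          ring
        · exact le_rfl
    _ = (∑ i : Fin N, ∑ j : Fin T, (if (i : ℕ) = (j : ℕ) then ∑ k, A k i ^ 2 / 2 else 0))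
        + (∑ i : Fin N, ∑ j : Fin T, (if (i : ℕ) = (j : ℕ) then ∑ k, B k j ^ 2 / 2 else 0)) := by
        rw [← Finset.sum_add_distrib]
        apply Finset.sum_congr rfl
        intro i _
        rw [← Finset.sum_add_distrib]
        apply Finset.sum_congr rfl
        intro j _
        split_ifs with hij <;> simp
    _ ≤ (∑ i : Fin N, ∑ k, A k i ^ 2 / 2) + (∑ j : Fin T, ∑ k, B k j ^ 2 / 2) := by
        apply add_le_add
        · apply Finset.sum_le_sum
          intro i _
          rw [sum_fin_ite' (fun _ => ∑ k, A k i ^ 2 / 2) (i : ℕ)]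
          split_ifs with h'
          · exact le_rfl
          · exact Finset.sum_nonneg fun k _ => by positivity
        · rw [Finset.sum_comm]
          apply Finset.sum_le_sum
          intro j _
          rw [sum_fin_ite (fun _ => ∑ k, B k j ^ 2 / 2) (j : ℕ)]
          split_ifs with h'
          · exact le_rfl
          · exact Finset.sum_nonneg fun k _ => by positivity
    _ = nuclearNorm M := by
        rw [hnuc, Finset.sum_comm]
        have h1 : ∑ k : Fin T, ∑ i : Fin N, A k i ^ 2 / 2 = ∑ k, Real.sqrt (lam k) / 2 := by
          apply Finset.sum_congr rfl
          intro k _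
          rw [← Finset.sum_div, hAsum k]
        have h2 : ∑ j : Fin T, ∑ k : Fin T, B k j ^ 2 / 2 = ∑ k, Real.sqrt (lam k) / 2 := by
          rw [Finset.sum_comm]
          apply Finset.sum_congr rfl
          intro k _
          rw [← Finset.sum_div, hBsum k]
        rw [h1, h2, ← Finset.sum_add_distrib]
        apply Finset.sum_congr rfl
        intro k _
        ring

lemma soft_min (d μ t : ℝ) (hd : 0 ≤ d) (hμ : 0 < μ) :
    1 / 2 * (d - max (d - μ) 0) ^ 2 + μ * max (d - μ) 0
      ≤ 1 / 2 * (d - t) ^ 2 + μ * |t| := by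
  rcases le_total (d - μ) 0 with h | h
  · rw [max_eq_right h]
    rcases abs_cases t with ⟨h1, h2⟩ | ⟨h1, h2⟩ <;>
      nlinarith [sq_nonneg t, sq_nonneg (d - t), sq_nonneg (d + t)]
  · rw [max_eq_left h]
    rcases abs_cases t with ⟨h1, h2⟩ | ⟨h1, h2⟩ <;>
      nlinarith [sq_nonneg (d - t - μ), sq_nonneg (d + t - μ)]

lemma sum_min_symm {N T : ℕ} (f : ℕ → ℝ) :
    (∑ j : Fin T, if (j : ℕ) < N then f (j : ℕ) else 0)
      = ∑ i : Fin N, if (i : ℕ) < T then f (i : ℕ) else 0 := by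
  rw [Fin.sum_univ_eq_sum_range (fun k => if k < N then f k else 0) T,
    Fin.sum_univ_eq_sum_range (fun k => if k < T then f k else 0) N,
    Finset.sum_ite, Finset.sum_ite]
  simp only [Finset.sum_const_zero, add_zero]
  congr 1
  ext k
  simp only [Finset.mem_filter, Finset.mem_range]
  omega

lemma nuclearNorm_diag_thresh {N T : ℕ} (m : ℕ → ℝ) (hm : ∀ k, 0 ≤ m k)
    (Dμ : Matrix (Fin N) (Fin T) ℝ)
    (hDμ : ∀ i j, Dμ i j = if (i : ℕ) = (j : ℕ) then m (i : ℕ) else 0) :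
    nuclearNorm Dμ = ∑ j : Fin T, if (j : ℕ) < N then m (j : ℕ) else 0 := by
  set g : Fin T → ℝ := fun j => if (j : ℕ) < N then m (j : ℕ) ^ 2 else 0 with hgdef
  have hGram : Dμᴴ * Dμ = Matrix.diagonal g := by
    ext j k
    simp only [Matrix.mul_apply, Matrix.conjTranspose_apply, star_trivial]
    by_cases hjk : (j : ℕ) = (k : ℕ)
    · have hj : j = k := Fin.ext hjk
      subst hj
      have : ∀ i : Fin N, Dμ i j * Dμ i j
          = (if (i : ℕ) = (j : ℕ) then (fun n => m n * m n) (i : ℕ) else 0) := by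
        intro i
        rw [hDμ]
        split_ifs <;> simp
      rw [Finset.sum_congr rfl fun i _ => this i, sum_fin_ite (fun n => m n * m n) (j : ℕ)]
      simp only [Matrix.diagonal_apply_eq, hgdef]
      split_ifs <;> ring
    · have hne : j ≠ k := fun h => hjk (congrArg _ h)
      rw [Matrix.diagonal_apply_ne g hne]
      apply Finset.sum_eq_zero
      intro i _
      rw [hDμ, hDμ]
      split_ifs with h1 h2
      · exact absurd (h1.symm.trans h2) hjk
      · simp
      · simp
      · simp
  have hherm : (Matrix.diagonal g).IsHermitian := hGram ▸ Matrix.isHermitian_conjTranspose_mul_self Dμ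
  rw [nuclearNorm,
    show (Matrix.isHermitian_conjTranspose_mul_self Dμ).eigenvalues = hherm.eigenvalues from
      eig_congr hGram _ _,
    sum_eigen_diagonal Real.sqrt g hherm]
  have hg : ∀ a : Fin T, Real.sqrt (g a) = if (a : ℕ) < N then m (a : ℕ) else 0 := by
    intro a
    rw [hgdef]
    by_cases h' : (a : ℕ) < N
    · simp only [if_pos h']
      exact Real.sqrt_sq (hm _)
    · simp only [if_neg h']
      exact Real.sqrt_zero
  exact Finset.sum_congr rfl fun a _ => hg a


/-- Singular value thresholding solves the nuclear-norm proximal step: if `Y = U D Vᵀ`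
is an SVD with nonincreasing nonnegative singular values `s`, then for `μ > 0` the
matrix `L̂ = U S_μ(D) Vᵀ` (soft-thresholding each singular value to `max(s_i − μ, 0)`)
minimizes `(1/2)‖Y − L‖_F² + μ‖L‖_*` over all matrices `L`. -/
theorem svt_solves_nuclear_prox {N T : ℕ} (Y : Matrix (Fin N) (Fin T) ℝ)
    (U : Matrix (Fin N) (Fin N) ℝ) (V : Matrix (Fin T) (Fin T) ℝ)
    (hU : Uᵀ * U = 1) (hV : Vᵀ * V = 1)
    (s : ℕ → ℝ) (hs0 : ∀ i, 0 ≤ s i) (hsmono : ∀ i j, i ≤ j → s j ≤ s i)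
    (D : Matrix (Fin N) (Fin T) ℝ)
    (hD : ∀ i j, D i j = if (i : ℕ) = (j : ℕ) then s (i : ℕ) else 0)
    (hY : Y = U * D * Vᵀ)
    (μ : ℝ) (hμ : 0 < μ)
    (Dμ : Matrix (Fin N) (Fin T) ℝ)
    (hDμ : ∀ i j, Dμ i j = if (i : ℕ) = (j : ℕ) then max (s (i : ℕ) - μ) 0 else 0)
    (Lhat : Matrix (Fin N) (Fin T) ℝ) (hLhat : Lhat = U * Dμ * Vᵀ) :
    ∀ L : Matrix (Fin N) (Fin T) ℝ,
      (1 / 2) * frobSq (Y - Lhat) + μ * nuclearNorm Lhat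
        ≤ (1 / 2) * frobSq (Y - L) + μ * nuclearNorm L := by
  intro L
  have hUUt : U * Uᵀ = 1 := mul_eq_one_comm.mp hU
  have hVVt : V * Vᵀ = 1 := mul_eq_one_comm.mp hV
  set mh : ℕ → ℝ := fun k => max (s k - μ) 0 with hmh
  set M : Matrix (Fin N) (Fin T) ℝ := Uᵀ * L * V with hMdef
  have hLM : L = U * M * Vᵀ := by
    rw [hMdef]
    calc L = (U * Uᵀ) * (L * (V * Vᵀ)) := by
          rw [hUUt, hVVt, Matrix.one_mul, Matrix.mul_one]
      _ = U * (Uᵀ * L * V) * Vᵀ := by simp only [Matrix.mul_assoc]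
  -- rewrite both sides in diagonal coordinates
  have hfrob1 : frobSq (Y - Lhat) = frobSq (D - Dμ) := by
    have h1 : Y - Lhat = U * (D - Dμ) * Vᵀ := by
      rw [hY, hLhat, ← Matrix.sub_mul, ← Matrix.mul_sub]
    rw [h1, frobSq_conj U V hU hV]
  have hfrob2 : frobSq (Y - L) = frobSq (D - M) := by
    have h1 : Y - L = U * (D - M) * Vᵀ := by
      rw [hY]
      nth_rewrite 1 [hLM]
      rw [← Matrix.sub_mul, ← Matrix.mul_sub]
    rw [h1, frobSq_conj U V hU hV]
  have hnuc1 : nuclearNorm Lhat = nuclearNorm Dμ := by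
    rw [hLhat, nuclearNorm_conj U V hU hV]
  have hnuc2 : nuclearNorm L = nuclearNorm M := by
    rw [hLM, nuclearNorm_conj U V hU hV]
  -- exact value of the left-hand side
  have hfrobL : frobSq (D - Dμ) = ∑ i : Fin N, ∑ j : Fin T,
      (if (i : ℕ) = (j : ℕ) then (s (i : ℕ) - mh (i : ℕ)) ^ 2 else 0) := by
    rw [frobSq]
    apply Finset.sum_congr rfl; intro i _
    apply Finset.sum_congr rfl; intro j _
    rw [Matrix.sub_apply, hD, hDμ]
    split_ifs with hij
    · rfl
    · simp
  have hnucL : nuclearNorm Dμ = ∑ i : Fin N, ∑ j : Fin T,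
      (if (i : ℕ) = (j : ℕ) then mh (i : ℕ) else 0) := by
    rw [nuclearNorm_diag_thresh mh (fun k => le_max_right _ _) Dμ hDμ,
      sum_min_symm (N := N) (T := T) mh]
    apply Finset.sum_congr rfl; intro i _
    exact (sum_fin_ite' (fun _ => mh (i : ℕ)) (i : ℕ)).symm
  -- lower bounds on the right-hand side
  have hfrobR : (∑ i : Fin N, ∑ j : Fin T,
      (if (i : ℕ) = (j : ℕ) then (s (i : ℕ) - M i j) ^ 2 else 0)) ≤ frobSq (D - M) := by
    rw [frobSq]
    apply Finset.sum_le_sum; intro i _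
    apply Finset.sum_le_sum; intro j _
    rw [Matrix.sub_apply, hD]
    split_ifs with hij
    · exact le_rfl
    · positivity
  calc (1 / 2) * frobSq (Y - Lhat) + μ * nuclearNorm Lhat
      = (1 / 2) * frobSq (D - Dμ) + μ * nuclearNorm Dμ := by rw [hfrob1, hnuc1]
    _ = ∑ i : Fin N, ∑ j : Fin T, (if (i : ℕ) = (j : ℕ)
          then 1 / 2 * (s (i : ℕ) - mh (i : ℕ)) ^ 2 + μ * mh (i : ℕ) else 0) := by
        rw [hfrobL, hnucL, Finset.mul_sum, Finset.mul_sum, ← Finset.sum_add_distrib]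
        apply Finset.sum_congr rfl; intro i _
        rw [Finset.mul_sum, Finset.mul_sum, ← Finset.sum_add_distrib]
        apply Finset.sum_congr rfl; intro j _
        split_ifs <;> simp
    _ ≤ ∑ i : Fin N, ∑ j : Fin T, (if (i : ℕ) = (j : ℕ)
          then 1 / 2 * (s (i : ℕ) - M i j) ^ 2 + μ * |M i j| else 0) := by
        apply Finset.sum_le_sum; intro i _
        apply Finset.sum_le_sum; intro j _
        split_ifs with hij
        · exact soft_min (s (i : ℕ)) μ (M i j) (hs0 _) hμ
        · exact le_rfl
    _ = (1 / 2) * (∑ i : Fin N, ∑ j : Fin T,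
            (if (i : ℕ) = (j : ℕ) then (s (i : ℕ) - M i j) ^ 2 else 0))
        + μ * (∑ i : Fin N, ∑ j : Fin T,
            (if (i : ℕ) = (j : ℕ) then |M i j| else 0)) := by
        rw [Finset.mul_sum, Finset.mul_sum, ← Finset.sum_add_distrib]
        apply Finset.sum_congr rfl; intro i _
        rw [Finset.mul_sum, Finset.mul_sum, ← Finset.sum_add_distrib]
        apply Finset.sum_congr rfl; intro j _
        split_ifs <;> simp
    _ ≤ (1 / 2) * frobSq (D - M) + μ * nuclearNorm M := by
        apply add_le_add
        · exact mul_le_mul_of_nonneg_left hfrobR (by norm_num)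
        · exact mul_le_mul_of_nonneg_left (diag_abs_le_nuclearNorm M) hμ.le
    _ = (1 / 2) * frobSq (Y - L) + μ * nuclearNorm L := by rw [hfrob2, hnuc2]
end
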